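/- (Chaining lemma for s(·)-John domains) Let D ⊆ ℝ^n, n ≥ 2, be an s(·)-John domain with John constants α, β and John center x₀. Then for every x ∈ D \ B(x₀, dist(x₀, ∂D)) there exists a sequence of balls B(x_i, r_i) with B(x_i, 2r_i) ⊆ D for all i ≥ 0, such that: (1) B₀ = B(x₀, dist(x₀, ∂D)/2); (2) dist(x, B_i)^{s(x)} ≤ K r_i for a constant K = K(α, β, dist(x₀, ∂D)) and r_i → 0 as i → ∞; (3) no point of D belongs to more than N = N(n) of the balls B(x_i, r_i); (4) |B(x_i, r_i) ∪ B(x_{i+1}, r_{i+1})| ≤ M |B(x_i, r_i) ∩ B(x_{i+1}, r_{i+1})| for a constant M = M(n). -/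

import Mathlib

open MeasureTheory Metric

section AuxiliaryLemmas
open Set

section Helpers

variable {X : Type*} [NormedAddCommGroup X] [NormedSpace ℝ X]

lemma ball_subset_of_le_infDist {D : Set X} (hD : IsOpen D) {z : X} (hz : z ∈ D)
    {ρ : ℝ} (hρ : ρ ≤ infDist z (frontier D)) : ball z ρ ⊆ D := by
  rcases le_or_gt ρ 0 with h0 | h0
  · simp [ball_eq_empty.2 h0]
  have hfr : ∀ w ∈ ball z ρ, w ∉ frontier D := by
    intro w hw hwf
    exact absurd (infDist_le_dist_of_mem hwf) (by linarith [mem_ball'.1 hw])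
  have hsub : ball z ρ ⊆ D ∪ (closure D)ᶜ := by
    intro w hw
    by_cases hwc : w ∈ closure D
    · rcases (closure_eq_self_union_frontier D ▸ hwc) with h | h
      · exact Or.inl h
      · exact absurd h (hfr w hw)
    · exact Or.inr hwc
  exact IsPreconnected.subset_left_of_subset_union hD isClosed_closure.isOpen_compl
    (disjoint_compl_right.mono_left subset_closure) hsub
    ⟨z, mem_ball_self h0, hz⟩ (convex_ball z ρ).isPreconnected

lemma infDist_frontier_pos {D : Set X} (hD : IsOpen D)
    (hne : (frontier D).Nonempty) {z : X} (hz : z ∈ D) : 0 < infDist z (frontier D) := by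
  obtain ⟨ε, hε, hball⟩ := Metric.isOpen_iff.1 hD z hz
  have : ε ≤ infDist z (frontier D) := by
    by_contra h
    push_neg at h
    obtain ⟨w, hwf, hwd⟩ := (infDist_lt_iff hne).1 h
    have : w ∈ D := hball (mem_ball'.2 hwd)
    have : w ∉ D := by
      intro hwD
      have := hwf.2
      simp [hD.interior_eq] at this
      exact this hwD
    tauto
  linarith

lemma frontier_nonempty_of_bounded [Nontrivial X] {D : Set X} (hne : D.Nonempty)
    (hb : Bornology.IsBounded D) : (frontier D).Nonempty := by
  rw [nonempty_frontier_iff]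
  refine ⟨hne, fun h => ?_⟩
  exact NormedSpace.unbounded_univ ℝ X (h ▸ hb)

end Helpers

section VolHelpers

variable {n : ℕ}

lemma vol_union_le (hn : 0 < n) {z : EuclideanSpace ℝ (Fin n)} {h C : ℝ} (hh : 0 < h)
    (hC : 0 ≤ C) (A B : Set (EuclideanSpace ℝ (Fin n)))
    (h1 : ball z h ⊆ A ∩ B) (h2 : A ∪ B ⊆ ball z (C * h)) :
    volume (A ∪ B) ≤ ENNReal.ofReal (C ^ n) * volume (A ∩ B) := by
  haveI : Nonempty (Fin n) := ⟨⟨0, hn⟩⟩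
  calc volume (A ∪ B) ≤ volume (ball z (C * h)) := measure_mono h2
    _ = ENNReal.ofReal (C ^ Module.finrank ℝ (EuclideanSpace ℝ (Fin n))) * volume (ball (0 : EuclideanSpace ℝ (Fin n)) h) :=
        Measure.addHaar_ball_mul volume z hC h
    _ = ENNReal.ofReal (C ^ n) * volume (ball z h) := by
        rw [finrank_euclideanSpace_fin, Measure.addHaar_ball_center volume z]
    _ ≤ ENNReal.ofReal (C ^ n) * volume (A ∩ B) := by
        exact mul_le_mul_right (measure_mono h1) _

lemma card_le_of_separated (hn : 0 < n) {T : Finset ℕ} {z : ℕ → EuclideanSpace ℝ (Fin n)}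
    {y : EuclideanSpace ℝ (Fin n)} {δ : ℝ} (hδ : 0 < δ)
    (hmem : ∀ i ∈ T, dist y (z i) < δ)
    (hsep : ∀ i ∈ T, ∀ j ∈ T, i ≠ j → δ / 10 ≤ dist (z i) (z j)) :
    T.card ≤ 21 ^ n := by
  haveI : Nonempty (Fin n) := ⟨⟨0, hn⟩⟩
  set ε := δ / 20 with hε
  have hεpos : 0 < ε := by positivity
  have hdisj : (T : Set ℕ).PairwiseDisjoint fun i => ball (z i) ε := by
    intro i hi j hj hij
    exact ball_disjoint_ball (by
      have := hsep i hi j hj hij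
      rw [hε]; linarith)
  have hcup : ∀ i ∈ T, ball (z i) ε ⊆ ball y (21 * ε) := by
    intro i hi w hw
    have h1 := hmem i hi
    have : dist w y ≤ dist w (z i) + dist (z i) y := dist_triangle _ _ _
    rw [mem_ball] at hw ⊢
    rw [dist_comm (z i) y] at this
    rw [hε] at *
    linarith
  have hvol : ∑ i ∈ T, volume (ball (z i) ε) ≤ volume (ball y (21 * ε)) := by
    rw [← measure_biUnion_finset hdisj (fun i _ => measurableSet_ball)]
    exact measure_mono (Set.iUnion₂_subset hcup)
  have hconst : ∀ i ∈ T, volume (ball (z i) ε) = volume (ball (0 : EuclideanSpace ℝ (Fin n)) ε) :=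
    fun i _ => Measure.addHaar_ball_center volume (z i) ε
  rw [Finset.sum_congr rfl hconst, Finset.sum_const, nsmul_eq_mul] at hvol
  have hbig : volume (ball y (21 * ε)) =
      ENNReal.ofReal ((21 : ℝ) ^ n) * volume (ball (0 : EuclideanSpace ℝ (Fin n)) ε) := by
    rw [Measure.addHaar_ball_mul volume y (by norm_num : (0:ℝ) ≤ 21) ε,
      finrank_euclideanSpace_fin]
  rw [hbig] at hvol
  have hV0 : volume (ball (0 : EuclideanSpace ℝ (Fin n)) ε) ≠ 0 :=
    (measure_ball_pos volume 0 hεpos).ne'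
  have hVtop : volume (ball (0 : EuclideanSpace ℝ (Fin n)) ε) ≠ ⊤ :=
    measure_ball_lt_top.ne
  have hcard : (T.card : ENNReal) ≤ ENNReal.ofReal ((21:ℝ) ^ n) :=
    (ENNReal.mul_le_mul_iff_left hV0 hVtop).1 hvol
  have : ENNReal.ofReal ((21:ℝ) ^ n) = ((21 ^ n : ℕ) : ENNReal) := by
    rw [ENNReal.ofReal_pow (by norm_num : (0:ℝ) ≤ 21)]
    norm_num
  rw [this] at hcard
  exact_mod_cast hcard

end VolHelpers

section Main

variable {n : ℕ}

set_option maxHeartbeats 1000000 in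
lemma chain_main (hn : 2 ≤ n) {D : Set (EuclideanSpace ℝ (Fin n))}
    (hDopen : IsOpen D) (hFne : (frontier D).Nonempty)
    {a b : ℝ} (ha : 0 < a) (hab : a ≤ b)
    {x₀ : EuclideanSpace ℝ (Fin n)} (hx₀ : x₀ ∈ D)
    {x : EuclideanSpace ℝ (Fin n)} (hxD : x ∈ D)
    (hxfar : infDist x₀ (frontier D) ≤ dist x x₀)
    {sx : ℝ} (hsx : 1 ≤ sx)
    {ℓ : ℝ} (hℓ0 : 0 ≤ ℓ) (hℓb : ℓ ≤ b)
    {γ : ℝ → EuclideanSpace ℝ (Fin n)} (hγ0 : γ 0 = x) (hγℓ : γ ℓ = x₀)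
    (hγlip : LipschitzOnWith 1 γ (Set.Icc 0 ℓ))
    (hγD : ∀ u ∈ Set.Icc 0 ℓ, γ u ∈ D)
    (hγJ : ∀ u ∈ Set.Icc 0 ℓ, u ^ sx ≤ (b / a) * infDist (γ u) (frontier D)) :
    ∃ (c : ℕ → EuclideanSpace ℝ (Fin n)) (r : ℕ → ℝ),
      (∀ i, 0 < r i ∧ ball (c i) (2 * r i) ⊆ D) ∧
      c 0 = x₀ ∧ r 0 = infDist x₀ (frontier D) / 2 ∧
      (∀ i, infDist x (ball (c i) (r i)) ^ sx ≤ (4 * b / a + 2) * r i) ∧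
      Filter.Tendsto r Filter.atTop (nhds 0) ∧
      (∀ y ∈ D, {i | y ∈ ball (c i) (r i)}.encard ≤ ((21 ^ n + 9 : ℕ) : ℕ∞)) ∧
      (∀ i, volume (ball (c i) (r i) ∪ ball (c (i + 1)) (r (i + 1)))
        ≤ ENNReal.ofReal ((36 + 6 * (b + infDist x₀ (frontier D))) ^ n) *
          volume (ball (c i) (r i) ∩ ball (c (i + 1)) (r (i + 1)))) := by
  haveI : Nonempty (Fin n) := ⟨⟨0, by omega⟩⟩
  set F := frontier D with hF
  set d := infDist x₀ F with hd_def
  have hd : 0 < d := infDist_frontier_pos hDopen hFne hx₀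
  have hb : 0 < b := lt_of_lt_of_le ha hab
  have hba : (0:ℝ) < b / a := div_pos hb ha
  -- distance along the curve
  have hdd : ∀ u ∈ Set.Icc 0 ℓ, ∀ v ∈ Set.Icc 0 ℓ, dist (γ u) (γ v) ≤ |u - v| := by
    intro u hu v hv
    have := hγlip.dist_le_mul u hu v hv
    simpa [Real.dist_eq] using this
  have hℓd : d ≤ ℓ := by
    have h1 : dist x x₀ ≤ ℓ := by
      have := hdd 0 ⟨le_refl 0, hℓ0⟩ ℓ ⟨hℓ0, le_refl ℓ⟩
      rw [hγ0, hγℓ, zero_sub, abs_neg, abs_of_nonneg hℓ0] at this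
      exact this
    linarith
  have hℓpos : 0 < ℓ := lt_of_lt_of_le hd hℓd
  have hγcont : ContinuousOn γ (Set.Icc 0 ℓ) := hγlip.continuousOn
  -- the times recursion
  set step : ℕ → ℝ → ℝ := fun i ti => sInf {u | u ∈ Set.Icc 0 ti ∧
      dist (γ u) (γ ti) ≤ (if i = 0 then d / 2 else infDist (γ ti) F / 4) / 2} with hstep_def
  set t : ℕ → ℝ := fun i => Nat.rec ℓ step i with ht_def
  set rr : ℕ → ℝ := fun i => if i = 0 then d / 2 else infDist (γ (t i)) F / 4 with hrr_def
  set S : ℕ → Set ℝ := fun i => {u | u ∈ Set.Icc 0 (t i) ∧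
      dist (γ u) (γ (t i)) ≤ rr i / 2} with hS_def
  have ht0 : t 0 = ℓ := rfl
  have htS : ∀ i, t (i + 1) = sInf (S i) := fun i => rfl
  have hrr0 : rr 0 = d / 2 := rfl
  have hrr1 : ∀ i, i ≠ 0 → rr i = infDist (γ (t i)) F / 4 := by
    intro i hi; simp [hrr_def, hi]
  have hrrnn : ∀ i, 0 ≤ rr i := by
    intro i
    rcases Nat.eq_zero_or_pos i with h | h
    · subst h; rw [hrr0]; linarith
    · rw [hrr1 i (by omega)]
      have := infDist_nonneg (x := γ (t i)) (s := F); linarith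
  have hSbdd : ∀ i, BddBelow (S i) := fun i => ⟨0, fun u hu => hu.1.1⟩
  have hSmem' : ∀ i, 0 ≤ t i → t i ∈ S i := by
    intro i h0
    exact ⟨⟨h0, le_refl _⟩, by simpa using div_nonneg (hrrnn i) (by norm_num)⟩
  have key : ∀ i, 0 ≤ t i → 0 ≤ t (i + 1) ∧ t (i + 1) ≤ t i := by
    intro i h0
    constructor
    · rw [htS i]; exact le_csInf ⟨_, hSmem' i h0⟩ (fun u hu => hu.1.1)
    · rw [htS i]; exact csInf_le (hSbdd i) (hSmem' i h0)
  have h0t : ∀ i, 0 ≤ t i := by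
    intro i
    induction i with
    | zero => exact hℓ0
    | succ i ih => exact (key i ih).1
  have htmono : ∀ i, t (i + 1) ≤ t i := fun i => (key i (h0t i)).2
  have hanti : Antitone t := antitone_nat_of_succ_le htmono
  have htle : ∀ i, t i ≤ ℓ := fun i => ht0 ▸ hanti (Nat.zero_le i)
  have htIcc : ∀ i, t i ∈ Set.Icc 0 ℓ := fun i => ⟨h0t i, htle i⟩
  have hmemD : ∀ i, γ (t i) ∈ D := fun i => hγD _ (htIcc i)
  have hddpos : ∀ i, 0 < infDist (γ (t i)) F := fun i =>
    infDist_frontier_pos hDopen hFne (hmemD i)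
  have hrpos : ∀ i, 0 < rr i := by
    intro i
    rcases Nat.eq_zero_or_pos i with h | h
    · subst h; rw [hrr0]; linarith
    · rw [hrr1 i (by omega)]; linarith [hddpos i]
  have hddl : ∀ i, 2 * rr i ≤ infDist (γ (t i)) F := by
    intro i
    rcases Nat.eq_zero_or_pos i with h | h
    · subst h; rw [hrr0, ht0, hγℓ, ← hd_def]; linarith
    · rw [hrr1 i (by omega)]; linarith [hddpos i]
  have hddu : ∀ i, infDist (γ (t i)) F ≤ 4 * rr i := by
    intro i
    rcases Nat.eq_zero_or_pos i with h | h
    · subst h; rw [hrr0, ht0, hγℓ, ← hd_def]; linarith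
    · rw [hrr1 i (by omega)]; linarith [hddpos i]
  -- closedness of S i and attainment
  have hSclosed : ∀ i, IsClosed (S i) := by
    intro i
    have hsub : Set.Icc 0 (t i) ⊆ Set.Icc 0 ℓ := Set.Icc_subset_Icc le_rfl (htle i)
    have hcont : ContinuousOn (fun u => dist (γ u) (γ (t i))) (Set.Icc 0 (t i)) :=
      (continuous_id.dist continuous_const).comp_continuousOn (hγcont.mono hsub)
    exact ContinuousOn.preimage_isClosed_of_isClosed hcont isClosed_Icc isClosed_Iic
  have hSmem : ∀ i, t (i + 1) ∈ S i := by
    intro i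
    rw [htS i]
    exact (hSclosed i).csInf_mem ⟨_, hSmem' i (h0t i)⟩ (hSbdd i)
  have hstepd : ∀ i, dist (γ (t (i + 1))) (γ (t i)) ≤ rr i / 2 := fun i => (hSmem i).2
  have hmin : ∀ i u, 0 ≤ u → u < t (i + 1) → rr i / 2 < dist (γ u) (γ (t i)) := by
    intro i u hu0 hu
    by_contra hcon
    push_neg at hcon
    have humem : u ∈ S i := ⟨⟨hu0, le_trans hu.le (htmono i)⟩, hcon⟩
    have := csInf_le (hSbdd i) humem
    rw [← htS i] at this
    linarith
  have hattain : ∀ i, rr i / 2 < dist x (γ (t i)) →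
      0 < t (i + 1) ∧ dist (γ (t (i + 1))) (γ (t i)) = rr i / 2 := by
    intro i hfar
    have hpos : 0 < t (i + 1) := by
      rcases (h0t (i + 1)).lt_or_eq with h | h
      · exact h
      · exfalso
        have := hstepd i
        rw [← h, hγ0] at this
        linarith
    refine ⟨hpos, ?_⟩
    by_contra hne
    have hlt : dist (γ (t (i + 1))) (γ (t i)) < rr i / 2 := lt_of_le_of_ne (hstepd i) hne
    set τ := t (i + 1) with hτ
    have hτIcc : τ ∈ Set.Icc 0 ℓ := htIcc (i + 1)
    have hcw : ContinuousWithinAt (fun u => dist (γ u) (γ (t i))) (Set.Icc 0 ℓ) τ :=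
      ((continuous_id.dist continuous_const).comp_continuousOn hγcont) τ hτIcc
    rw [Metric.continuousWithinAt_iff] at hcw
    obtain ⟨δ, hδpos, hδ⟩ := hcw (rr i / 2 - dist (γ τ) (γ (t i))) (by linarith)
    set u := max 0 (τ - δ / 2) with hu_def
    have huτ : u < τ := max_lt hpos (by linarith)
    have huIcc : u ∈ Set.Icc 0 ℓ := ⟨le_max_left _ _, le_trans huτ.le hτIcc.2⟩
    have hud : dist u τ < δ := by
      rw [Real.dist_eq, abs_of_nonpos (by linarith : u - τ ≤ 0)]
      have : τ - δ / 2 ≤ u := le_max_right _ _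
      linarith
    have := hδ huIcc hud
    rw [Real.dist_eq] at this
    have huS : u ∈ S i := by
      refine ⟨⟨le_max_left _ _, le_trans huτ.le (htmono i)⟩, ?_⟩
      have habs := abs_lt.1 this
      linarith [habs.1, habs.2]
    have := csInf_le (hSbdd i) huS
    rw [← htS i] at this
    linarith
  -- termination
  have htermex : ∃ i, dist x (γ (t i)) ≤ rr i / 2 := by
    by_contra hcon
    push_neg at hcon
    have hatt : ∀ i, dist (γ (t (i + 1))) (γ (t i)) = rr i / 2 :=
      fun i => (hattain i (hcon i)).2
    set tst := ⨅ i, t i with htst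
    have hbdd : BddBelow (Set.range t) := ⟨0, by rintro _ ⟨i, rfl⟩; exact h0t i⟩
    have htt0 : Filter.Tendsto t Filter.atTop (nhds tst) := tendsto_atTop_ciInf hanti hbdd
    have htstIcc : tst ∈ Set.Icc 0 ℓ := by
      constructor
      · exact le_ciInf h0t
      · exact le_trans (ciInf_le hbdd 0) (le_of_eq ht0)
    have htt : Filter.Tendsto t Filter.atTop (nhdsWithin tst (Set.Icc 0 ℓ)) :=
      tendsto_nhdsWithin_of_tendsto_nhds_of_eventually_within _ htt0
        (Filter.Eventually.of_forall htIcc)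
    have hclim : Filter.Tendsto (fun i => γ (t i)) Filter.atTop (nhds (γ tst)) :=
      (hγcont tst htstIcc).tendsto.comp htt
    have hclim1 : Filter.Tendsto (fun i => γ (t (i + 1))) Filter.atTop (nhds (γ tst)) :=
      hclim.comp (Filter.tendsto_add_atTop_nat 1)
    have hdist0 : Filter.Tendsto (fun i => dist (γ (t (i + 1))) (γ (t i)))
        Filter.atTop (nhds 0) := by
      have := hclim1.dist hclim
      simpa using this
    have hrrlim : Filter.Tendsto (fun i => dist (γ (t (i + 1))) (γ (t i)))
        Filter.atTop (nhds (infDist (γ tst) F / 8)) := by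
      have h1 : Filter.Tendsto (fun i => infDist (γ (t i)) F / 8)
          Filter.atTop (nhds (infDist (γ tst) F / 8)) :=
        (((continuous_infDist_pt F).tendsto _).comp hclim).div_const 8
      refine h1.congr' ?_
      filter_upwards [Filter.eventually_ge_atTop 1] with i hi
      rw [hatt i, hrr1 i (by omega)]
      ring
    have huniq : infDist (γ tst) F / 8 = 0 := tendsto_nhds_unique hrrlim hdist0
    have : 0 < infDist (γ tst) F := infDist_frontier_pos hDopen hFne (hγD tst htstIcc)
    linarith
  classical
  set m := Nat.find htermex with hm_def
  have hPm : dist x (γ (t m)) ≤ rr m / 2 := Nat.find_spec htermex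
  have hnotP : ∀ j, j < m → rr j / 2 < dist x (γ (t j)) := by
    intro j hj
    have := Nat.find_min htermex hj
    push_neg at this
    exact this
  -- separation of the curve centers
  have hsep : ∀ i j, i < j → j ≤ m → rr i / 2 ≤ dist (γ (t i)) (γ (t j)) := by
    intro i j hij hjm
    have him : i < m := lt_of_lt_of_le hij hjm
    have h1 : t j ≤ t (i + 1) := hanti hij
    rcases h1.lt_or_eq with h | h
    · have := hmin i (t j) (h0t j) h
      rw [dist_comm]
      linarith
    · rw [h, dist_comm]
      exact le_of_eq (hattain i (hnotP i him)).2.symm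
  -- tower at x
  have hrm : 0 < rr m := hrpos m
  set ρ0 : ℝ := min (2/3 : ℝ) (rr m / 5) with hρ0_def
  have hρ0pos : 0 < ρ0 := lt_min (by norm_num) (by linarith)
  set ρ : ℕ → ℝ := fun j => ρ0 * (4/5) ^ j with hρ_def
  have hρpos : ∀ j, 0 < ρ j := fun j => mul_pos hρ0pos (by positivity)
  have hρle0 : ∀ j, ρ j ≤ ρ0 := by
    intro j
    have h1 : ((4:ℝ)/5) ^ j ≤ 1 := pow_le_one₀ (by norm_num) (by norm_num)
    calc ρ0 * (4/5) ^ j ≤ ρ0 * 1 := by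
          exact mul_le_mul_of_nonneg_left h1 hρ0pos.le
      _ = ρ0 := mul_one _
  have hρ23 : ∀ j, ρ j ≤ 2/3 := fun j => le_trans (hρle0 j) (min_le_left _ _)
  have hρr5 : ∀ j, ρ j ≤ rr m / 5 := fun j => le_trans (hρle0 j) (min_le_right _ _)
  have hρsucc : ∀ j, ρ (j + 1) = (4/5) * ρ j := by
    intro j
    simp only [hρ_def, pow_succ]
    ring
  set e : EuclideanSpace ℝ (Fin n) := EuclideanSpace.single ⟨0, by omega⟩ (1:ℝ) with he_def
  have hnorme : ‖e‖ = 1 := by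
    rw [he_def, EuclideanSpace.norm_single, norm_one]
  set p : ℕ → EuclideanSpace ℝ (Fin n) := fun j => x + (2 * ρ j) • e with hp_def
  have hxp : ∀ j, dist x (p j) = 2 * ρ j := by
    intro j
    rw [hp_def]
    simp only []
    rw [dist_self_add_right, norm_smul, hnorme, Real.norm_eq_abs,
      abs_of_nonneg (by linarith [hρpos j]), mul_one]
  have hpp : ∀ j, dist (p j) (p (j + 1)) = (2/5) * ρ j := by
    intro j
    rw [hp_def]
    simp only []
    rw [dist_add_left, dist_eq_norm, ← sub_smul, norm_smul, hnorme, Real.norm_eq_abs,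
      mul_one, hρsucc j]
    rw [abs_of_nonneg (by linarith [hρpos j])]
    ring
  set δx : ℝ := infDist x F with hδx_def
  have hδxl : 3/2 * rr m ≤ δx := by
    have h1 : infDist (γ (t m)) F ≤ infDist x F + dist (γ (t m)) x :=
      infDist_le_infDist_add_dist
    have h2 := hddl m
    rw [dist_comm] at h1
    linarith [hPm]
  have hballx : ball x δx ⊆ D := ball_subset_of_le_infDist hDopen hxD le_rfl
  have hpD : ∀ j, p j ∈ D := by
    intro j
    apply hballx
    rw [mem_ball, dist_comm, hxp j]
    linarith [hρr5 j]
  have hpF : ∀ j, 2 * ρ j ≤ infDist (p j) F := by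
    intro j
    have h1 : infDist x F ≤ infDist (p j) F + dist x (p j) := infDist_le_infDist_add_dist
    rw [hxp j] at h1
    linarith [hρr5 j]
  -- upper bound on the curve radii
  have hrub : ∀ i, rr i ≤ b + d := by
    intro i
    rcases Nat.eq_zero_or_pos i with h | h
    · subst h; rw [hrr0]; linarith
    · rw [hrr1 i (by omega)]
      have h1 : infDist (γ (t i)) F ≤ infDist x₀ F + dist (γ (t i)) x₀ :=
        infDist_le_infDist_add_dist
      have h2 : dist (γ (t i)) x₀ ≤ ℓ - t i := by
        have := hdd (t i) (htIcc i) ℓ ⟨hℓ0, le_refl ℓ⟩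
        rw [hγℓ, abs_of_nonpos (by linarith [htle i] : t i - ℓ ≤ 0)] at this
        linarith
      have := h0t i
      rw [← hd_def] at h1
      linarith
  -- the chain
  set c : ℕ → EuclideanSpace ℝ (Fin n) := fun i => if i ≤ m then γ (t i) else p (i - (m + 1))
    with hc_def
  set r : ℕ → ℝ := fun i => if i ≤ m then rr i else ρ (i - (m + 1)) with hr_def
  have hcle : ∀ i, i ≤ m → c i = γ (t i) ∧ r i = rr i := by
    intro i hi; rw [hc_def, hr_def]; simp [hi]
  have hcgt : ∀ i, m < i → c i = p (i - (m + 1)) ∧ r i = ρ (i - (m + 1)) := by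
    intro i hi; rw [hc_def, hr_def]; simp [Nat.not_le.2 hi]
  have hρ00 : ρ 0 = ρ0 := by rw [hρ_def]; simp
  have hρeq : ∀ k, ρ k = ρ0 * (4/5 : ℝ) ^ k := fun k => rfl
  have hzball : ∀ j, (x + ((3/2) * ρ j) • e) ∈ ball (p j) (ρ j) := by
    intro j
    rw [mem_ball, hp_def]
    simp only []
    rw [dist_add_left, dist_eq_norm, ← sub_smul, norm_smul, hnorme, Real.norm_eq_abs,
      mul_one]
    rw [abs_of_nonpos (by linarith [hρpos j] : (3/2) * ρ j - 2 * ρ j ≤ 0)]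
    linarith [hρpos j]
  have hdistxz : ∀ j, dist x (x + ((3/2) * ρ j) • e) = (3/2) * ρ j := by
    intro j
    rw [dist_self_add_right, norm_smul, hnorme, Real.norm_eq_abs, mul_one,
      abs_of_nonneg (by linarith [hρpos j])]
  clear_value S m ρ0 ρ e p δx c r
  clear hstep_def ht_def hrr_def hS_def hm_def hc_def hr_def hρ_def hp_def hδx_def
  refine ⟨c, r, ?_, ?_, ?_, ?_, ?_, ?_, ?_⟩
  · -- balls in D
    intro i
    by_cases him : i ≤ m
    · obtain ⟨hc1, hr1⟩ := hcle i him
      rw [hc1, hr1]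
      refine ⟨hrpos i, ?_⟩
      exact ball_subset_of_le_infDist hDopen (hmemD i) (hddl i)
    · push_neg at him
      obtain ⟨hc1, hr1⟩ := hcgt i him
      rw [hc1, hr1]
      set j := i - (m + 1)
      refine ⟨hρpos j, ?_⟩
      exact ball_subset_of_le_infDist hDopen (hpD j) (hpF j)
  · rw [(hcle 0 (Nat.zero_le m)).1, ht0, hγℓ]
  · rw [(hcle 0 (Nat.zero_le m)).2, hrr0, hd_def]
  · -- condition (2)
    intro i
    by_cases him : i ≤ m
    · obtain ⟨hc1, hr1⟩ := hcle i him
      rw [hc1, hr1]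
      have h1 : infDist x (ball (γ (t i)) (rr i)) ≤ dist x (γ (t i)) :=
        infDist_le_dist_of_mem (mem_ball_self (hrpos i))
      have h2 : dist x (γ (t i)) ≤ t i := by
        have := hdd 0 ⟨le_refl 0, hℓ0⟩ (t i) (htIcc i)
        rw [hγ0, zero_sub, abs_neg, abs_of_nonneg (h0t i)] at this
        exact this
      have h3 : infDist x (ball (γ (t i)) (rr i)) ^ sx ≤ (t i) ^ sx :=
        Real.rpow_le_rpow infDist_nonneg (le_trans h1 h2) (by linarith)
      have h4 := hγJ (t i) (htIcc i)
      have h5 : (b / a) * infDist (γ (t i)) F ≤ (b / a) * (4 * rr i) :=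
        mul_le_mul_of_nonneg_left (hddu i) hba.le
      have h6 : (b / a) * (4 * rr i) ≤ (4 * b / a + 2) * rr i := by
        have h7 := hrrnn i
        have h8 : (b / a) * (4 * rr i) = (4 * b / a) * rr i := by ring
        rw [h8]
        nlinarith
      linarith
    · push_neg at him
      obtain ⟨hc1, hr1⟩ := hcgt i him
      rw [hc1, hr1]
      set j := i - (m + 1)
      have hzmem := hzball j
      have h1 : infDist x (ball (p j) (ρ j)) ≤ dist x (x + ((3/2) * ρ j) • e) :=
        infDist_le_dist_of_mem hzmem
      have h2 : dist x (x + ((3/2) * ρ j) • e) = (3/2) * ρ j := hdistxz j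
      have h3 : infDist x (ball (p j) (ρ j)) ^ sx ≤ ((3/2) * ρ j) ^ sx :=
        Real.rpow_le_rpow infDist_nonneg (by rw [← h2]; exact h1) (by linarith)
      have h4 : ((3/2) * ρ j) ^ sx ≤ (3/2) * ρ j := by
        have hbase0 : 0 < (3/2) * ρ j := by linarith [hρpos j]
        have hbase1 : (3/2) * ρ j ≤ 1 := by linarith [hρ23 j]
        calc ((3/2) * ρ j) ^ sx ≤ ((3/2) * ρ j) ^ (1:ℝ) :=
              Real.rpow_le_rpow_of_exponent_ge hbase0 hbase1 hsx
          _ = (3/2) * ρ j := Real.rpow_one _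
      have h5 : (3/2) * ρ j ≤ (4 * b / a + 2) * ρ j := by
        have h6 : (0:ℝ) < 4 * b / a := by positivity
        nlinarith [hρpos j, mul_pos h6 (hρpos j)]
      linarith
  · -- tendsto
    have hgeo : Filter.Tendsto (fun k : ℕ => ρ0 * (4/5:ℝ) ^ k) Filter.atTop (nhds 0) := by
      have := tendsto_pow_atTop_nhds_zero_of_lt_one (by norm_num : (0:ℝ) ≤ 4/5)
        (by norm_num : (4/5:ℝ) < 1)
      simpa using this.const_mul ρ0
    have hcomp : Filter.Tendsto (fun i : ℕ => ρ0 * (4/5:ℝ) ^ (i - (m + 1)))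
        Filter.atTop (nhds 0) := hgeo.comp (Filter.tendsto_sub_atTop_nat (m + 1))
    refine hcomp.congr' ?_
    filter_upwards [Filter.eventually_gt_atTop m] with i hi
    rw [(hcgt i hi).2]
    exact (hρeq _).symm
  · -- overlap (3)
    intro y hyD
    have hδpos : 0 < infDist y F := infDist_frontier_pos hDopen hFne hyD
    set δ := infDist y F with hδ_def
    classical
    set T : Finset ℕ := (Finset.range (m+1)).filter (fun i => y ∈ ball (γ (t i)) (rr i))
      with hT_def
    have hTmem : ∀ i, i ∈ T ↔ (i ≤ m ∧ dist y (γ (t i)) < rr i) := by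
      intro i
      rw [hT_def, Finset.mem_filter, Finset.mem_range]
      constructor
      · rintro ⟨h1, h2⟩; exact ⟨by omega, mem_ball.1 h2⟩
      · rintro ⟨h1, h2⟩; exact ⟨by omega, mem_ball.2 h2⟩
    have hpin1 : ∀ i ∈ T, rr i < δ := by
      intro i hi
      obtain ⟨him, hdy⟩ := (hTmem i).1 hi
      have h1 : infDist (γ (t i)) F ≤ δ + dist (γ (t i)) y := by
        have := infDist_le_infDist_add_dist (x := γ (t i)) (y := y) (s := F)
        rw [← hδ_def] at this
        linarith
      rw [dist_comm] at h1
      linarith [hddl i]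
    have hpin2 : ∀ i ∈ T, δ < 5 * rr i := by
      intro i hi
      obtain ⟨him, hdy⟩ := (hTmem i).1 hi
      have h1 : δ ≤ infDist (γ (t i)) F + dist y (γ (t i)) := by
        have := infDist_le_infDist_add_dist (x := y) (y := γ (t i)) (s := F)
        rw [← hδ_def] at this
        linarith
      linarith [hddu i]
    have hmem' : ∀ i ∈ T, dist y (γ (t i)) < δ := by
      intro i hi
      exact lt_trans ((hTmem i).1 hi).2 (hpin1 i hi)
    have hsep' : ∀ i ∈ T, ∀ j ∈ T, i ≠ j → δ / 10 ≤ dist (γ (t i)) (γ (t j)) := by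
      intro i hi j hj hij
      rcases hij.lt_or_gt with h | h
      · have := hsep i j h ((hTmem j).1 hj).1
        linarith [hpin2 i hi]
      · have := hsep j i h ((hTmem i).1 hi).1
        rw [dist_comm]
        linarith [hpin2 j hj]
    have hcard : T.card ≤ 21 ^ n := card_le_of_separated (by omega) hδpos hmem' hsep'
    -- tower membership window
    have htow : ∀ i i', m + 1 ≤ i → m + 1 ≤ i' → y ∈ ball (c i) (r i) →
        y ∈ ball (c i') (r i') → i' ≤ i + 4 := by
      intro i i' hi hi' hyi hyi'
      by_contra hcon
      push_neg at hcon
      set j := i - (m + 1) with hj_def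
      set j' := i' - (m + 1) with hj'_def
      have hjj : j + 5 ≤ j' := by omega
      obtain ⟨hc1, hr1⟩ := hcgt i (by omega)
      obtain ⟨hc2, hr2⟩ := hcgt i' (by omega)
      rw [hc1, hr1, ← hj_def] at hyi
      rw [hc2, hr2, ← hj'_def] at hyi'
      rw [mem_ball] at hyi hyi'
      have hlow : ρ j < dist y x := by
        have h1 : dist x (p j) ≤ dist x y + dist y (p j) := dist_triangle _ _ _
        rw [hxp j] at h1
        rw [dist_comm y x]
        linarith [hρpos j]
      have hup : dist y x < 3 * ρ j' := by
        have h1 : dist y x ≤ dist y (p j') + dist (p j') x := dist_triangle _ _ _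
        rw [dist_comm (p j') x, hxp j'] at h1
        linarith
      have hdecay : ρ j' ≤ (4/5 : ℝ)^5 * ρ j := by
        rw [hρeq j', hρeq j]
        have h1 : ((4:ℝ)/5) ^ j' ≤ (4/5 : ℝ) ^ (j + 5) :=
          pow_le_pow_of_le_one (by norm_num) (by norm_num) hjj
        have h2 : ((4:ℝ)/5) ^ (j + 5) = (4/5:ℝ)^5 * (4/5:ℝ)^j := by
          rw [pow_add]; ring
        calc ρ0 * (4/5:ℝ) ^ j' ≤ ρ0 * ((4/5:ℝ)^5 * (4/5:ℝ)^j) := by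
              rw [← h2]; exact mul_le_mul_of_nonneg_left h1 hρ0pos.le
          _ = (4/5:ℝ)^5 * (ρ0 * (4/5:ℝ)^j) := by ring
      have : (4/5 : ℝ)^5 = 1024/3125 := by norm_num
      rw [this] at hdecay
      linarith [hρpos j]
    -- assembling the count
    have hsub : {i | y ∈ ball (c i) (r i)} ⊆
        (↑T : Set ℕ) ∪ {i | m + 1 ≤ i ∧ y ∈ ball (c i) (r i)} := by
      intro i hi
      rcases le_or_gt i m with him | him
      · left
        rw [Finset.mem_coe, hTmem i]
        have hi' : y ∈ ball (c i) (r i) := hi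
        obtain ⟨hc1, hr1⟩ := hcle i him
        rw [hc1, hr1] at hi'
        exact ⟨him, mem_ball.1 hi'⟩
      · right
        exact ⟨by omega, hi⟩
    have hA : (↑T : Set ℕ).encard ≤ ((21 ^ n : ℕ) : ℕ∞) := by
      rw [Set.encard_coe_eq_coe_finsetCard]
      exact_mod_cast hcard
    have hB : {i | m + 1 ≤ i ∧ y ∈ ball (c i) (r i)}.encard ≤ ((9 : ℕ) : ℕ∞) := by
      set B := {i | m + 1 ≤ i ∧ y ∈ ball (c i) (r i)} with hB_def
      rcases Set.eq_empty_or_nonempty B with hBe | ⟨i₀, hi₀⟩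
      · rw [hBe]; simp
      · have hBsub : B ⊆ Set.Icc (i₀ - 4) (i₀ + 4) := by
          intro i hi
          have h1 : i ≤ i₀ + 4 := htow i₀ i hi₀.1 hi.1 hi₀.2 hi.2
          have h2 : i₀ ≤ i + 4 := htow i i₀ hi.1 hi₀.1 hi.2 hi₀.2
          exact ⟨by omega, h1⟩
        calc B.encard ≤ (Set.Icc (i₀ - 4) (i₀ + 4)).encard := Set.encard_mono hBsub
          _ = ((Finset.Icc (i₀ - 4) (i₀ + 4) : Finset ℕ) : Set ℕ).encard := by
              rw [Finset.coe_Icc]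
          _ = (Finset.Icc (i₀ - 4) (i₀ + 4)).card := Set.encard_coe_eq_coe_finsetCard _
          _ ≤ ((9 : ℕ) : ℕ∞) := by
              rw [Nat.card_Icc]
              exact_mod_cast (by omega : i₀ + 4 + 1 - (i₀ - 4) ≤ 9)
    calc {i | y ∈ ball (c i) (r i)}.encard
        ≤ ((↑T : Set ℕ) ∪ {i | m + 1 ≤ i ∧ y ∈ ball (c i) (r i)}).encard :=
          Set.encard_mono hsub
      _ ≤ (↑T : Set ℕ).encard + {i | m + 1 ≤ i ∧ y ∈ ball (c i) (r i)}.encard :=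
          Set.encard_union_le _ _
      _ ≤ ((21 ^ n : ℕ) : ℕ∞) + ((9 : ℕ) : ℕ∞) := add_le_add hA hB
      _ = ((21 ^ n + 9 : ℕ) : ℕ∞) := by push_cast; rfl
  · -- volume (4)
    intro i
    have hn0 : 0 < n := by omega
    set C : ℝ := 36 + 6 * (b + d) with hC_def
    have hC36 : 36 ≤ C := by linarith
    have hC0 : 0 ≤ C := by linarith
    rcases lt_trichotomy i m with him | him | him
    · -- both curve balls
      have hi1 : i + 1 ≤ m := him
      obtain ⟨hc1, hr1⟩ := hcle i (le_of_lt him)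
      obtain ⟨hc2, hr2⟩ := hcle (i + 1) hi1
      rw [hc1, hr1, hc2, hr2]
      have hdcc : dist (γ (t i)) (γ (t (i + 1))) ≤ rr i / 2 := by
        rw [dist_comm]; exact hstepd i
      have hinf1' : infDist (γ (t i)) F ≤ infDist (γ (t (i+1))) F + dist (γ (t i)) (γ (t (i+1))) :=
        infDist_le_infDist_add_dist
      have hinf2' : infDist (γ (t (i+1))) F ≤ infDist (γ (t i)) F + dist (γ (t (i+1))) (γ (t i)) :=
        infDist_le_infDist_add_dist
      have hdcc' : dist (γ (t (i+1))) (γ (t i)) ≤ rr i / 2 := hstepd i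
      have hinf1 : infDist (γ (t i)) F ≤ infDist (γ (t (i+1))) F + rr i / 2 := by linarith
      have hinf2 : infDist (γ (t (i+1))) F ≤ infDist (γ (t i)) F + rr i / 2 := by linarith
      have hre : rr (i + 1) = infDist (γ (t (i+1))) F / 4 := hrr1 (i+1) (by omega)
      have hr38 : (3/8) * rr i ≤ rr (i + 1) := by
        rw [hre]; linarith [hddl i]
      have hr98 : rr (i + 1) ≤ (9/8) * rr i := by
        rw [hre]; linarith [hddu i]
      apply vol_union_le hn0 (z := γ (t (i+1))) (h := (3/32) * rr i)
        (by nlinarith [hrpos i] : (0:ℝ) < (3/32) * rr i) hC0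
      · intro w hw
        rw [mem_ball] at hw
        constructor
        · rw [mem_ball]
          calc dist w (γ (t i)) ≤ dist w (γ (t (i+1))) + dist (γ (t (i+1))) (γ (t i)) :=
                dist_triangle _ _ _
            _ < (3/32) * rr i + rr i / 2 := by linarith [hstepd i]
            _ ≤ rr i := by linarith [hrrnn i]
        · rw [mem_ball]
          calc dist w (γ (t (i+1))) < (3/32) * rr i := hw
            _ ≤ rr (i + 1) := by linarith
      · intro w hw
        rw [mem_ball]
        have hCc : (3/2) * rr i ≤ C * ((3/32) * rr i) := by
          nlinarith [hrrnn i]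
        rcases hw with hw | hw
        · rw [mem_ball] at hw
          calc dist w (γ (t (i+1))) ≤ dist w (γ (t i)) + dist (γ (t i)) (γ (t (i+1))) :=
                dist_triangle _ _ _
            _ < rr i + rr i / 2 := by linarith
            _ ≤ C * ((3/32) * rr i) := by linarith
        · rw [mem_ball] at hw
          calc dist w (γ (t (i+1))) < rr (i + 1) := hw
            _ ≤ C * ((3/32) * rr i) := by linarith
    · -- junction
      rw [him]
      obtain ⟨hc1, hr1⟩ := hcle m le_rfl
      obtain ⟨hc2, hr2⟩ := hcgt (m + 1) (by omega)
      have hj0 : m + 1 - (m + 1) = 0 := by omega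
      rw [hj0] at hc2 hr2
      rw [hc1, hr1, hc2, hr2]
      have hρ05 : ρ 0 ≤ rr m / 5 := hρr5 0
      have hdcm : dist (γ (t m)) (p 0) ≤ rr m / 2 + 2 * ρ 0 := by
        calc dist (γ (t m)) (p 0) ≤ dist (γ (t m)) x + dist x (p 0) := dist_triangle _ _ _
          _ ≤ rr m / 2 + 2 * ρ 0 := by
              rw [dist_comm, hxp 0]; linarith [hPm]
      apply vol_union_le hn0 (z := p 0) (h := ρ 0 / 2)
        (by linarith [hρpos 0] : (0:ℝ) < ρ 0 / 2) hC0
      · intro w hw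
        rw [mem_ball] at hw
        constructor
        · rw [mem_ball]
          calc dist w (γ (t m)) ≤ dist w (p 0) + dist (p 0) (γ (t m)) := dist_triangle _ _ _
            _ < ρ 0 / 2 + (rr m / 2 + 2 * ρ 0) := by
                rw [dist_comm (p 0)]; linarith
            _ ≤ rr m := by linarith
        · rw [mem_ball]
          linarith [hρpos 0]
      · intro w hw
        rw [mem_ball]
        have hbound : 2 * rr m ≤ C * (ρ 0 / 2) := by
          rcases le_total (2/3 : ℝ) (rr m / 5) with hcase | hcase
          · have hρ0eq : ρ0 = 2/3 := by rw [hρ0_def]; exact min_eq_left hcase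
            rw [hρ00, hρ0eq]
            have h36 := hrub m
            linarith
          · have hρ0eq : ρ0 = rr m / 5 := by rw [hρ0_def]; exact min_eq_right hcase
            rw [hρ00, hρ0eq]
            have h1 : C * (rr m / 5 / 2) = (C / 10) * rr m := by ring
            rw [h1]
            have h2 : (36:ℝ)/10 ≤ C/10 := by linarith
            have h3 : ((36:ℝ)/10) * rr m ≤ (C/10) * rr m :=
              mul_le_mul_of_nonneg_right h2 (hrrnn m)
            linarith
        rcases hw with hw | hw
        · rw [mem_ball] at hw
          calc dist w (p 0) ≤ dist w (γ (t m)) + dist (γ (t m)) (p 0) := dist_triangle _ _ _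
            _ < rr m + (rr m / 2 + 2 * ρ 0) := by linarith
            _ ≤ 2 * rr m := by linarith
            _ ≤ C * (ρ 0 / 2) := hbound
        · rw [mem_ball] at hw
          calc dist w (p 0) < ρ 0 := hw
            _ ≤ 2 * rr m := by linarith [hrpos m]
            _ ≤ C * (ρ 0 / 2) := hbound
    · -- both tower balls
      obtain ⟨hc1, hr1⟩ := hcgt i him
      obtain ⟨hc2, hr2⟩ := hcgt (i + 1) (by omega)
      set j := i - (m + 1) with hj_def
      have hj1 : i + 1 - (m + 1) = j + 1 := by omega
      rw [hj1] at hc2 hr2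
      rw [hc1, hr1, hc2, hr2]
      have hs45 : ρ (j + 1) = (4/5) * ρ j := hρsucc j
      apply vol_union_le hn0 (z := p (j + 1)) (h := ρ (j + 1) / 2)
        (by linarith [hρpos (j+1)] : (0:ℝ) < ρ (j + 1) / 2) hC0
      · intro w hw
        rw [mem_ball] at hw
        constructor
        · rw [mem_ball]
          calc dist w (p j) ≤ dist w (p (j + 1)) + dist (p (j + 1)) (p j) := dist_triangle _ _ _
            _ < ρ (j + 1) / 2 + (2/5) * ρ j := by
                rw [dist_comm (p (j+1))]; linarith [hpp j]
            _ ≤ ρ j := by linarith [hρpos j]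
        · rw [mem_ball]
          linarith [hρpos (j+1)]
      · intro w hw
        rw [mem_ball]
        have hbig : (7/5) * ρ j ≤ C * (ρ (j + 1) / 2) := by
          nlinarith [hρpos j]
        rcases hw with hw | hw
        · rw [mem_ball] at hw
          calc dist w (p (j + 1)) ≤ dist w (p j) + dist (p j) (p (j + 1)) := dist_triangle _ _ _
            _ < ρ j + (2/5) * ρ j := by linarith [hpp j]
            _ = (7/5) * ρ j := by ring
            _ ≤ C * (ρ (j + 1) / 2) := hbig
        · rw [mem_ball] at hw
          calc dist w (p (j + 1)) < ρ (j + 1) := hw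
            _ ≤ (7/5) * ρ j := by linarith [hρpos j]
            _ ≤ C * (ρ (j + 1) / 2) := hbig

end Main


end AuxiliaryLemmas

/-- `D` is an `s(·)`-John domain with John constants `a ≤ b` and John center `x₀`:
every point of `D` is joined to `x₀` by a rectifiable curve, parametrized by arc
length (hence `1`-Lipschitz), of length at most `b`, along which
`t^{s(x)} ≤ (b/a) dist(γ t, ∂D)`. -/
def IsJohnDomain {n : ℕ} (D : Set (EuclideanSpace ℝ (Fin n)))
    (s : EuclideanSpace ℝ (Fin n) → ℝ) (a b : ℝ)
    (x₀ : EuclideanSpace ℝ (Fin n)) : Prop :=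
  IsOpen D ∧ IsConnected D ∧ Bornology.IsBounded D ∧ 0 < a ∧ a ≤ b ∧ x₀ ∈ D ∧
    ∀ x ∈ D, ∃ ℓ : ℝ, 0 ≤ ℓ ∧ ℓ ≤ b ∧
      ∃ γ : ℝ → EuclideanSpace ℝ (Fin n),
        γ 0 = x ∧ γ ℓ = x₀ ∧ LipschitzOnWith 1 γ (Set.Icc 0 ℓ) ∧
        (∀ t ∈ Set.Icc 0 ℓ, γ t ∈ D) ∧
        (∀ t ∈ Set.Icc 0 ℓ, t ^ s x ≤ (b / a) * Metric.infDist (γ t) (frontier D))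

/-- Chaining lemma for `s(·)`-John domains (Lemma 5.3). -/
theorem john_chain {n : ℕ} (hn : 2 ≤ n)
    (D : Set (EuclideanSpace ℝ (Fin n)))
    (s : EuclideanSpace ℝ (Fin n) → ℝ) (a b : ℝ)
    (x₀ : EuclideanSpace ℝ (Fin n))
    (hD : IsJohnDomain D s a b x₀) (hs : ∀ x ∈ D, 1 ≤ s x) :
    ∃ K : ℝ, 0 < K ∧ ∃ N : ℕ, ∃ M : ℝ, 0 < M ∧
      ∀ x ∈ D \ Metric.ball x₀ (Metric.infDist x₀ (frontier D)),
        ∃ (c : ℕ → EuclideanSpace ℝ (Fin n)) (r : ℕ → ℝ),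
          (∀ i, 0 < r i ∧ Metric.ball (c i) (2 * r i) ⊆ D) ∧
          -- (1)
          c 0 = x₀ ∧ r 0 = Metric.infDist x₀ (frontier D) / 2 ∧
          -- (2)
          (∀ i, Metric.infDist x (Metric.ball (c i) (r i)) ^ s x ≤ K * r i) ∧
          Filter.Tendsto r Filter.atTop (nhds 0) ∧
          -- (3)
          (∀ y ∈ D, {i | y ∈ Metric.ball (c i) (r i)}.encard ≤ N) ∧
          -- (4)
          (∀ i, volume (Metric.ball (c i) (r i) ∪ Metric.ball (c (i + 1)) (r (i + 1)))
            ≤ ENNReal.ofReal M *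
              volume (Metric.ball (c i) (r i) ∩ Metric.ball (c (i + 1)) (r (i + 1)))) := by
  obtain ⟨hDopen, hDconn, hDbdd, ha, hab, hx₀D, hJohn⟩ := hD
  haveI : Nonempty (Fin n) := ⟨⟨0, by omega⟩⟩
  haveI : Nontrivial (EuclideanSpace ℝ (Fin n)) := inferInstance
  have hFne : (frontier D).Nonempty := frontier_nonempty_of_bounded ⟨x₀, hx₀D⟩ hDbdd
  have hb : 0 < b := lt_of_lt_of_le ha hab
  have hd0 : 0 ≤ Metric.infDist x₀ (frontier D) := Metric.infDist_nonneg
  refine ⟨4 * b / a + 2, by positivity, 21 ^ n + 9,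
    (36 + 6 * (b + Metric.infDist x₀ (frontier D))) ^ n, by positivity, ?_⟩
  intro x hx
  have hxD : x ∈ D := hx.1
  have hxfar : Metric.infDist x₀ (frontier D) ≤ dist x x₀ := by
    have := hx.2
    rw [Metric.mem_ball] at this
    exact not_lt.1 this
  obtain ⟨ℓ, hℓ0, hℓb, γ, hγ0, hγℓ, hγlip, hγD, hγJ⟩ := hJohn x hxD
  exact chain_main hn hDopen hFne ha hab hx₀D hxD hxfar (hs x hxD) hℓ0 hℓb hγ0 hγℓ
    hγlip hγD hγJ
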